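/- Let n ≥ 4 with n ≡ 0 (mod 4), let Θ̂ be a real number with (n−2)·π/2 < Θ̂ < n·π/2, and let μ₁, …, μ_{n−1} be real numbers with Σ_{k=1}^{n−1} arctan(μ_k) > Θ̂ − π/2. Then the complex number z := ∏_{k=1}^{n−1} (1 + i·μ_k) satisfies Im(z) + cot(Θ̂)·Re(z) < 0. -/

import Mathlib

open Real

lemma fac_polar (x : ℝ) : (1 + Complex.I * (x : ℂ)) =
    (Real.sqrt (1 + x ^ 2) : ℂ) * Complex.exp ((Real.arctan x : ℂ) * Complex.I) := by
  have hs : (Real.sqrt (1 + x ^ 2) : ℝ) ≠ 0 := by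
    positivity
  rw [Complex.exp_mul_I, ← Complex.ofReal_cos, ← Complex.ofReal_sin,
    Real.cos_arctan, Real.sin_arctan]
  have : ((Real.sqrt (1 + x ^ 2) : ℂ)) ≠ 0 := by exact_mod_cast hs
  push_cast
  field_simp

/-- Case `n ≡ 0 (mod 4)` of Proposition 8.1: if
`Σ_{k=1}^{n-1} arctan μ_k > Θ̂ - π/2` with `Θ̂ ∈ ((n-2)π/2, nπ/2)`, then
`z = ∏ (1 + i μ_k)` satisfies `Im z + cot(Θ̂) Re z < 0`. -/
theorem stmt_13 (n : ℕ) (hn : 4 ≤ n) (hmod : n % 4 = 0) (Θhat : ℝ)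
    (h1 : ((n : ℝ) - 2) * (π / 2) < Θhat) (h2 : Θhat < (n : ℝ) * (π / 2))
    (μ : Fin (n - 1) → ℝ)
    (hμ : Θhat - π / 2 < ∑ k, Real.arctan (μ k)) :
    (∏ k, (1 + Complex.I * (μ k : ℂ))).im +
        (Real.cos Θhat / Real.sin Θhat) * (∏ k, (1 + Complex.I * (μ k : ℂ))).re < 0 := by
  set S := ∑ k, Real.arctan (μ k) with hS
  set R := ∏ k, Real.sqrt (1 + (μ k) ^ 2) with hRdef
  have hR : 0 < R := by
    apply Finset.prod_pos
    intro k _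
    positivity
  have hprod : (∏ k, (1 + Complex.I * (μ k : ℂ))) =
      (R : ℂ) * Complex.exp ((S : ℂ) * Complex.I) := by
    calc (∏ k, (1 + Complex.I * (μ k : ℂ)))
        = ∏ k, ((Real.sqrt (1 + (μ k) ^ 2) : ℂ) *
            Complex.exp ((Real.arctan (μ k) : ℂ) * Complex.I)) := by
          exact Finset.prod_congr rfl fun k _ => fac_polar (μ k)
      _ = (∏ k, (Real.sqrt (1 + (μ k) ^ 2) : ℂ)) *
            ∏ k, Complex.exp ((Real.arctan (μ k) : ℂ) * Complex.I) := by
          rw [Finset.prod_mul_distrib]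
      _ = (R : ℂ) * Complex.exp ((S : ℂ) * Complex.I) := by
          rw [← Complex.exp_sum, hRdef, hS]
          push_cast
          rw [Finset.sum_mul]
  have him : (∏ k, (1 + Complex.I * (μ k : ℂ))).im = R * Real.sin S := by
    rw [hprod]
    simp [Complex.exp_ofReal_mul_I_re, Complex.exp_ofReal_mul_I_im]
  have hre : (∏ k, (1 + Complex.I * (μ k : ℂ))).re = R * Real.cos S := by
    rw [hprod]
    simp [Complex.exp_ofReal_mul_I_re, Complex.exp_ofReal_mul_I_im]
  rw [him, hre]
  -- sin Θhat < 0
  obtain ⟨m, hm⟩ : ∃ m, n = 4 * m := ⟨n / 4, by omega⟩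
  have hsin : Real.sin Θhat < 0 := by
    have key : Real.sin Θhat = Real.sin (Θhat - 2 * m * π) := by
      conv_lhs => rw [show Θhat = (Θhat - 2 * m * π) + (m : ℤ) * (2 * π) by push_cast; ring]
      rw [Real.sin_add_int_mul_two_pi]
    rw [key]
    have hlo : -π < Θhat - 2 * m * π := by
      have : ((n : ℝ) - 2) * (π / 2) = 2 * m * π - π := by
        rw [hm]; push_cast; ring
      linarith [h1, this ▸ h1]
    have hhi : Θhat - 2 * m * π < 0 := by
      have : (n : ℝ) * (π / 2) = 2 * m * π := by
        rw [hm]; push_cast; ring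
      linarith [this ▸ h2]
    have := Real.sin_pos_of_pos_of_lt_pi (x := -(Θhat - 2 * m * π)) (by linarith) (by linarith)
    rw [Real.sin_neg] at this
    linarith
  -- cos (S - Θhat) > 0
  have hcard : (Finset.univ : Finset (Fin (n - 1))).card = n - 1 := by simp
  have hn1 : ((n - 1 : ℕ) : ℝ) = (n : ℝ) - 1 := by
    have : 1 ≤ n := by omega
    push_cast [this]; ring
  have hSub : S < ((n : ℝ) - 1) * (π / 2) := by
    have hne : (Finset.univ : Finset (Fin (n - 1))).Nonempty := by
      rw [Finset.univ_nonempty_iff]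
      exact Fin.pos_iff_nonempty.mp (by omega)
    have := Finset.sum_lt_sum_of_nonempty hne
      (f := fun k => Real.arctan (μ k)) (g := fun _ => π / 2)
      (fun k _ => Real.arctan_lt_pi_div_two (μ k))
    rw [Finset.sum_const, hcard, nsmul_eq_mul, hn1] at this
    exact this
  have hcos : 0 < Real.cos (S - Θhat) := by
    apply Real.cos_pos_of_mem_Ioo
    exact Set.mem_Ioo.mpr ⟨by linarith, by linarith⟩
  have hkey : R * Real.sin S + Real.cos Θhat / Real.sin Θhat * (R * Real.cos S)
      = R * Real.cos (S - Θhat) / Real.sin Θhat := by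
    have hne : Real.sin Θhat ≠ 0 := ne_of_lt hsin
    rw [Real.cos_sub]
    field_simp
    ring
  rw [hkey]
  exact div_neg_of_pos_of_neg (by positivity) hsin
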